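/- Let A be an n×n integer matrix whose associated quadratic form Q(v) = vᵀAv is indefinite over ℤ (takes both positive and negative values), and define 𝓕 ⊆ ℤ as the set of all integers of the form Σᵢ vᵢᵀAvᵢ for finitely many vectors vᵢ ∈ ℤⁿ (i.e. the union of images of the quadratic forms of A^{⊕k} for all k ≥ 1, which is closed under addition). Then 𝓕 is a subgroup of ℤ, namely the subgroup generated by the entries A_{kk} (1 ≤ k ≤ n) and A_{ij} + A_{ji} (1 ≤ i < j ≤ n). -/

import Mathlib

open Matrix

private lemma quad_decomp (n : ℕ) (A : Matrix (Fin n) (Fin n) ℤ) (v : Fin n → ℤ) :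
    v ⬝ᵥ A *ᵥ v = ∑ i, (v i * v i) * A i i
      + ∑ i, ∑ j ∈ Finset.Ioi i, (v i * v j) * (A i j + A j i) := by
  have key := Finset.sum_sum_Ioi_add_eq_sum_sum_off_diag
    (fun i j : Fin n => v j * A j i * v i)
  simp only [dotProduct, mulVec, dotProduct, Finset.mul_sum]
  have : ∀ i : Fin n, ∑ j, v i * (A i j * v j)
      = v i * A i i * v i + ∑ j ∈ ({i}ᶜ : Finset (Fin n)), v i * A i j * v j := by
    intro i
    rw [Finset.compl_singleton, ← Finset.add_sum_erase _ _ (Finset.mem_univ i)]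
    ring_nf
  have key2 : ∑ x : Fin n, ∑ j ∈ ({x}ᶜ : Finset (Fin n)), v x * A x j * v j
      = ∑ i, ∑ j ∈ Finset.Ioi i, (v i * A i j * v j + v j * A j i * v i) := by
    convert key.symm using 2 with i
  rw [Finset.sum_congr rfl fun i _ => this i, Finset.sum_add_distrib, key2]
  congr 1
  · exact Finset.sum_congr rfl fun i _ => by ring
  · refine Finset.sum_congr rfl fun i _ => Finset.sum_congr rfl fun j _ => by ring

theorem stmt17 (n : ℕ) (A : Matrix (Fin n) (Fin n) ℤ)
    (hindef : (∃ v : Fin n → ℤ, 0 < v ⬝ᵥ A *ᵥ v) ∧ (∃ w : Fin n → ℤ, w ⬝ᵥ A *ᵥ w < 0))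
    (F : Set ℤ)
    (hF : F = {x | ∃ (k : ℕ) (v : Fin k → (Fin n → ℤ)),
      x = ∑ i, (v i) ⬝ᵥ A *ᵥ (v i)}) :
    F = (AddSubgroup.closure
      ((Set.range fun k : Fin n => A k k) ∪
        {x | ∃ i j : Fin n, i < j ∧ x = A i j + A j i}) : Set ℤ) := by
  subst hF
  set G : Set ℤ := (Set.range fun k : Fin n => A k k) ∪
      {x | ∃ i j : Fin n, i < j ∧ x = A i j + A j i} with hG
  set P : Set ℤ := {x | ∃ (k : ℕ) (v : Fin k → (Fin n → ℤ)),
      x = ∑ i, (v i) ⬝ᵥ A *ᵥ (v i)} with hP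
  -- Basic closure properties of P
  have hQmemP : ∀ v : Fin n → ℤ, v ⬝ᵥ A *ᵥ v ∈ P := fun v =>
    ⟨1, fun _ => v, by simp⟩
  have hzero : (0 : ℤ) ∈ P := ⟨0, Fin.elim0, by simp⟩
  have hadd : ∀ x ∈ P, ∀ y ∈ P, x + y ∈ P := by
    rintro x ⟨k, v, rfl⟩ y ⟨l, w, rfl⟩
    refine ⟨k + l, Fin.append v w, ?_⟩
    rw [Fin.sum_univ_add]
    simp [Fin.append_left, Fin.append_right]
  have hnsmul : ∀ (m : ℕ), ∀ x ∈ P, (m : ℤ) * x ∈ P := by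
    intro m
    induction m with
    | zero => intro x _; simpa using hzero
    | succ m ih =>
      intro x hx
      have := hadd _ (ih x hx) _ hx
      convert this using 1
      push_cast; ring
  -- negation, using indefiniteness
  obtain ⟨⟨vp, hvp⟩, ⟨vm, hvm⟩⟩ := hindef
  have hneg : ∀ x ∈ P, -x ∈ P := by
    intro x hx
    rcases lt_trichotomy x 0 with h | h | h
    · -- x < 0 : -x = (-x) * p + (p - 1) * x  where p = Q vp > 0
      set p := vp ⬝ᵥ A *ᵥ vp with hp
      have h1 : ((-x).toNat : ℤ) * p ∈ P := hnsmul _ _ (hQmemP vp)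
      have h2 : ((p - 1).toNat : ℤ) * x ∈ P := hnsmul _ _ hx
      have := hadd _ h1 _ h2
      have e1 : ((-x).toNat : ℤ) = -x := Int.toNat_of_nonneg (by omega)
      have e2 : ((p - 1).toNat : ℤ) = p - 1 := Int.toNat_of_nonneg (by omega)
      rw [e1, e2] at this
      convert this using 1; ring
    · simp [h, hzero]
    · -- x > 0 : -x = x * m + (-m - 1) * x  where m = Q vm < 0
      set q := vm ⬝ᵥ A *ᵥ vm with hq
      have h1 : (x.toNat : ℤ) * q ∈ P := hnsmul _ _ (hQmemP vm)
      have h2 : ((-q - 1).toNat : ℤ) * x ∈ P := hnsmul _ _ hx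
      have := hadd _ h1 _ h2
      have e1 : ((x).toNat : ℤ) = x := Int.toNat_of_nonneg (by omega)
      have e2 : ((-q - 1).toNat : ℤ) = -q - 1 := Int.toNat_of_nonneg (by omega)
      rw [e1, e2] at this
      convert this using 1; ring
  -- P as an AddSubgroup
  set S : AddSubgroup ℤ :=
    { carrier := P
      zero_mem' := hzero
      add_mem' := fun hx hy => hadd _ hx _ hy
      neg_mem' := fun hx => hneg _ hx } with hS
  have hPS : P = (S : Set ℤ) := rfl
  rw [hPS]
  -- value of the quadratic form on a standard basis vector
  have hsingle : ∀ k : Fin n, Pi.single k 1 ⬝ᵥ A *ᵥ Pi.single k 1 = A k k := by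
    intro k
    rw [quad_decomp]
    have h1 : ∑ i, ((Pi.single k 1 : Fin n → ℤ) i * (Pi.single k 1 : Fin n → ℤ) i) * A i i = A k k := by
      rw [Finset.sum_eq_single k]
      · simp
      · intro b _ hbk; simp [Pi.single_apply, hbk]
      · intro h; exact absurd (Finset.mem_univ k) h
    have h2 : ∑ i, ∑ j ∈ Finset.Ioi i,
        ((Pi.single k 1 : Fin n → ℤ) i * (Pi.single k 1 : Fin n → ℤ) j) * (A i j + A j i) = 0 := by
      refine Finset.sum_eq_zero fun i _ => Finset.sum_eq_zero fun j hj => ?_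
      have hij : i ≠ j := ne_of_lt (Finset.mem_Ioi.mp hj)
      rcases eq_or_ne i k with rfl | h
      · simp [Pi.single_apply, hij.symm]
      · simp [Pi.single_apply, h]
    rw [h1, h2, add_zero]
  suffices h : S = AddSubgroup.closure G by rw [h]
  apply le_antisymm
  · -- S ≤ closure G
    intro x hx
    obtain ⟨k, v, rfl⟩ := hx
    refine AddSubgroup.sum_mem _ fun i _ => ?_
    rw [quad_decomp]
    refine AddSubgroup.add_mem _ (AddSubgroup.sum_mem _ fun a _ => ?_)
      (AddSubgroup.sum_mem _ fun a _ => AddSubgroup.sum_mem _ fun b hb => ?_)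
    · have hg : A a a ∈ AddSubgroup.closure G :=
        AddSubgroup.subset_closure (Or.inl ⟨a, rfl⟩)
      simpa using zsmul_mem hg (v i a * v i a)
    · have hg : A a b + A b a ∈ AddSubgroup.closure G :=
        AddSubgroup.subset_closure (Or.inr ⟨a, b, Finset.mem_Ioi.mp hb, rfl⟩)
      simpa using zsmul_mem hg (v i a * v i b)
  · -- closure G ≤ S
    rw [AddSubgroup.closure_le]
    rintro x (⟨k, rfl⟩ | ⟨i, j, hij, rfl⟩)
    · have := hQmemP (Pi.single k 1)
      rwa [hsingle k] at this
    · have hne : i ≠ j := ne_of_lt hij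
      set u : Fin n → ℤ := Pi.single i 1 + Pi.single j 1 with hu
      have hui : u i = 1 := by simp [hu, Pi.single_apply, hne]
      have huj : u j = 1 := by simp [hu, Pi.single_apply, hne.symm]
      have hu0 : ∀ a, a ≠ i → a ≠ j → u a = 0 := by
        intro a h1 h2; simp [hu, Pi.single_apply, h1, h2]
      have h1 : ∀ a, (u a * u a) * A a a
          = (if a = i then A i i else 0) + (if a = j then A j j else 0) := by
        intro a
        rcases eq_or_ne a i with rfl | hai
        · simp [hui, hne]
        · rcases eq_or_ne a j with rfl | haj
          · simp [huj, hai]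
          · simp [hu0 a hai haj, hai, haj]
      have h2 : ∀ a, ∑ b ∈ Finset.Ioi a, (u a * u b) * (A a b + A b a)
          = if a = i then A i j + A j i else 0 := by
        intro a
        rcases eq_or_ne a i with rfl | hai
        · rw [if_pos rfl, Finset.sum_eq_single j]
          · rw [hui, huj]; ring
          · intro b hb hbj
            have hab : a < b := Finset.mem_Ioi.mp hb
            rw [hu0 b (ne_of_gt hab) hbj]; ring
          · intro hj; exact absurd (Finset.mem_Ioi.mpr hij) hj
        · rw [if_neg hai]
          rcases eq_or_ne a j with rfl | haj
          · refine Finset.sum_eq_zero fun b hb => ?_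
            have hab : a < b := Finset.mem_Ioi.mp hb
            have hbi : b ≠ i := fun h => absurd (h ▸ hab) (not_lt.mpr hij.le)
            rw [hu0 b hbi (ne_of_gt hab)]; ring
          · refine Finset.sum_eq_zero fun b _ => ?_
            rw [hu0 a hai haj]; ring
      have huQ : u ⬝ᵥ A *ᵥ u = A i i + A j j + (A i j + A j i) := by
        rw [quad_decomp, Finset.sum_congr rfl fun a _ => h1 a,
          Finset.sum_congr rfl fun a _ => h2 a, Finset.sum_add_distrib]
        simp
      have hmem : A i i + A j j + (A i j + A j i) ∈ P := huQ ▸ hQmemP u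
      have hAi : A i i ∈ P := hsingle i ▸ hQmemP _
      have hAj : A j j ∈ P := hsingle j ▸ hQmemP _
      have h3 : -(A i i) ∈ P := hneg _ hAi
      have h4 : -(A j j) ∈ P := hneg _ hAj
      have := hadd _ (hadd _ hmem _ h3) _ h4
      have e : A i j + A j i = A i i + A j j + (A i j + A j i) + -A i i + -A j j := by ring
      rw [e]; exact this
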